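/- arXiv:1603.05520 — 2 statements merged into one kernel-verified Lean document; each statement's English description precedes it below -/
import Mathlib

section
/- Let c > 1 be an integer. There is an efficient algorithm that, given a DPSP instance (σ, σ', M, K) and a non-crossing subset M' ⊆ M of demand pairs that violates every constraint in K by a factor of at most c, computes a subset M'' ⊆ M' of at least |M'|/c demand pairs that satisfies all constraints in K. -/
noncomputable section
namespace DPSP

/-- A constraint of the Demand Pair Selection Problem.  The two disjoint directed paths
`σ` and `σ'` are modeled by `Fin a` and `Fin b` with their natural (strict) orders `<`;
all sources of demand pairs lie on `σ = Fin a` and all destinations on `σ' = Fin b`.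
A constraint `(i, x, y, w)` of type `i ∈ {1,2,3,4}` is built by the `i`-th constructor. -/
inductive Con (a b : ℕ) : Type
  | one : Fin a → Fin a → ℕ → Con a b
  | two : Fin b → Fin b → ℕ → Con a b
  | three : Fin a → Fin b → ℕ → Con a b
  | four : Fin a → Fin b → ℕ → Con a b
  deriving DecidableEq

/-- Well-formedness of a constraint: the weight satisfies `w ≥ 1`, and for type-1 and
type-2 constraints the two endpoints satisfy `x ≺ y`. -/
def WellFormed {a b : ℕ} : Con a b → Prop
  | .one x y w => x < y ∧ 1 ≤ w
  | .two x y w => x < y ∧ 1 ≤ w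
  | .three _ _ w => 1 ≤ w
  | .four _ _ w => 1 ≤ w

/-- A set `M'` of demand pairs satisfies a constraint. -/
def Satisfies {a b : ℕ} (M' : Finset (Fin a × Fin b)) : Con a b → Prop
  | .one x y w => (M'.filter fun p => x ≤ p.1 ∧ p.1 ≤ y).card ≤ w
  | .two x y w => (M'.filter fun p => x ≤ p.2 ∧ p.2 ≤ y).card ≤ w
  | .three x y w => (M'.filter fun p => p.1 ≤ x ∧ y ≤ p.2).card ≤ w
  | .four x y w => (M'.filter fun p => x ≤ p.1 ∧ p.2 ≤ y).card ≤ w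

/-- Two demand pairs cross. -/
def Crosses {a b : ℕ} (p q : Fin a × Fin b) : Prop :=
  p.1 = q.1 ∨ p.2 = q.2 ∨ (p.1 < q.1 ∧ q.2 < p.2) ∨ (q.1 < p.1 ∧ p.2 < q.2)

/-- A set of demand pairs is non-crossing iff no two of its pairs cross. -/
def NonCrossing {a b : ℕ} (M' : Finset (Fin a × Fin b)) : Prop :=
  ∀ p ∈ M', ∀ q ∈ M', p ≠ q → ¬ Crosses p q

/-- The optimum of a `DPSP` instance: the maximum cardinality of a non-crossing subset
of `M` satisfying all constraints of `K`. -/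
def opt {a b : ℕ} (M : Finset (Fin a × Fin b)) (K : Finset (Con a b)) : ℕ :=
  sSup {n : ℕ | ∃ M' ⊆ M, NonCrossing M' ∧ (∀ con ∈ K, Satisfies M' con) ∧ M'.card = n}

end DPSP

namespace DPSP

/-- A set `M'` of demand pairs violates a constraint by a factor of at most `c`. -/
def ViolatesByAtMost {a b : ℕ} (M' : Finset (Fin a × Fin b)) (c : ℕ) : Con a b → Prop
  | .one x y w => (M'.filter fun p => x ≤ p.1 ∧ p.1 ≤ y).card ≤ c * w
  | .two x y w => (M'.filter fun p => x ≤ p.2 ∧ p.2 ≤ y).card ≤ c * w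
  | .three x y w => (M'.filter fun p => p.1 ≤ x ∧ y ≤ p.2).card ≤ c * w
  | .four x y w => (M'.filter fun p => x ≤ p.1 ∧ p.2 ≤ y).card ≤ c * w


section Aux
variable {a b : ℕ}


lemma count_upper (c m L : ℕ) (hc : 2 ≤ c) :
    ((Finset.Ico m (m+L)).filter fun k => k % c = 1).card ≤ (L-1)/c + 1 := by
  have hmono : ∀ k1 ∈ (Finset.Ico m (m+L)).filter (fun k => k % c = 1),
      ∀ k2 ∈ (Finset.Ico m (m+L)).filter (fun k => k % c = 1),
      k1 < k2 → (k1 - m)/c < (k2 - m)/c := by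
    intro k1 h1 k2 h2 hlt
    simp only [Finset.mem_filter, Finset.mem_Ico] at h1 h2
    have hd : c ∣ k2 - k1 := by
      have : k1 ≡ k2 [MOD c] := by show k1 % c = k2 % c; omega
      exact (Nat.modEq_iff_dvd' hlt.le).mp this
    have hge : c ≤ k2 - k1 := Nat.le_of_dvd (by omega) hd
    have hle : (k1 - m) + c ≤ k2 - m := by omega
    calc (k1 - m)/c < (k1 - m)/c + 1 := Nat.lt_succ_self _
      _ = ((k1 - m) + c)/c := (Nat.add_div_right _ (by omega)).symm
      _ ≤ (k2 - m)/c := Nat.div_le_div_right hle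
  have := Finset.card_le_card_of_injOn
    (s := (Finset.Ico m (m+L)).filter fun k => k % c = 1)
    (t := Finset.range ((L-1)/c + 1))
    (fun k => (k - m)/c)
    (fun k hk => by
      simp only [Finset.mem_coe, Finset.mem_filter, Finset.mem_Ico] at hk
      rw [Finset.mem_coe, Finset.mem_range]
      have : k - m ≤ L - 1 := by omega
      exact Nat.lt_succ_of_le (Nat.div_le_div_right this))
    (fun k1 h1 k2 h2 heq => by
      rcases lt_trichotomy k1 k2 with h | h | h
      · exact absurd heq (Nat.ne_of_lt (hmono k1 h1 k2 h2 h))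
      · exact h
      · exact absurd heq.symm (Nat.ne_of_lt (hmono k2 h2 k1 h1 h)))
  simpa using this

lemma count_lower (c n : ℕ) (hc : 2 ≤ c) (hn : 1 ≤ n) :
    (n-1)/c + 1 ≤ ((Finset.Icc 1 n).filter fun k => k % c = 1).card := by
  have := Finset.card_le_card_of_injOn (s := Finset.range ((n-1)/c + 1))
    (t := (Finset.Icc 1 n).filter fun k => k % c = 1)
    (fun j => c * j + 1)
    (fun j hj => by
      rw [Finset.mem_coe, Finset.mem_range] at hj
      have h1 : c * j ≤ c * ((n-1)/c) := Nat.mul_le_mul_left c (by omega)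
      have h2 : c * ((n-1)/c) ≤ n - 1 := Nat.mul_div_le _ _
      simp only [Finset.mem_coe, Finset.mem_filter, Finset.mem_Icc]
      refine ⟨⟨by omega, by omega⟩, ?_⟩
      rw [Nat.mul_add_mod]
      exact Nat.one_mod_eq_one.mpr (by omega))
    (fun j1 _ j2 _ heq => by
      have heq' : c * j1 + 1 = c * j2 + 1 := heq
      have h2 : c * j1 = c * j2 := by omega
      exact Nat.eq_of_mul_eq_mul_left (by omega) h2)
  simpa using this


/-- rank of a demand pair within `M'`, ordered by source. -/
def rk (M' : Finset (Fin a × Fin b)) (p : Fin a × Fin b) : ℕ :=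
  (M'.filter fun q => q.1 ≤ p.1).card

lemma rk_le_rk (M' : Finset (Fin a × Fin b)) {p r : Fin a × Fin b} (h : p.1 ≤ r.1) :
    rk M' p ≤ rk M' r :=
  Finset.card_le_card fun q hq => by
    rw [Finset.mem_filter] at hq ⊢
    exact ⟨hq.1, le_trans hq.2 h⟩

lemma rk_lt_rk (M' : Finset (Fin a × Fin b)) {p r : Fin a × Fin b} (hr : r ∈ M')
    (h : p.1 < r.1) : rk M' p < rk M' r := by
  apply Finset.card_lt_card
  rw [Finset.ssubset_iff_of_subset (fun q hq => by
    rw [Finset.mem_filter] at hq ⊢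
    exact ⟨hq.1, le_trans hq.2 h.le⟩)]
  refine ⟨r, Finset.mem_filter.mpr ⟨hr, le_refl _⟩, fun hmem => ?_⟩
  exact absurd (Finset.mem_filter.mp hmem).2 (not_le.mpr h)

lemma fst_le_of_rk_le (M' : Finset (Fin a × Fin b)) {p r : Fin a × Fin b} (hr : r ∈ M')
    (h : rk M' r ≤ rk M' p) : r.1 ≤ p.1 := by
  by_contra hlt
  exact absurd h (not_le.mpr (rk_lt_rk M' hr (not_le.mp hlt)))

lemma fst_ne {M' : Finset (Fin a × Fin b)} (hnc : NonCrossing M') {p q : Fin a × Fin b}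
    (hp : p ∈ M') (hq : q ∈ M') (hne : p ≠ q) : p.1 ≠ q.1 :=
  fun h => hnc p hp q hq hne (Or.inl h)

lemma snd_le_snd {M' : Finset (Fin a × Fin b)} (hnc : NonCrossing M') {p q : Fin a × Fin b}
    (hp : p ∈ M') (hq : q ∈ M') (h : p.1 ≤ q.1) : p.2 ≤ q.2 := by
  by_cases hpq : p = q
  · exact le_of_eq (congrArg Prod.snd hpq)
  · have hcr := hnc p hp q hq hpq
    have h1 : p.1 ≠ q.1 := fst_ne hnc hp hq hpq
    simp only [Crosses, not_or, not_and] at hcr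
    by_contra hlt
    exact hcr.2.2.1 (lt_of_le_of_ne h h1) (not_le.mp hlt)

lemma rk_injOn {M' : Finset (Fin a × Fin b)} (hnc : NonCrossing M') :
    Set.InjOn (rk M') M' := by
  intro p hp q hq heq
  by_contra hne
  have h1 : p.1 ≠ q.1 := fst_ne hnc hp hq hne
  rcases lt_or_gt_of_ne h1 with h | h
  · exact absurd heq (Nat.ne_of_lt (rk_lt_rk M' hq h))
  · exact absurd heq.symm (Nat.ne_of_lt (rk_lt_rk M' hp h))

lemma rk_mem_Icc {M' : Finset (Fin a × Fin b)} {p : Fin a × Fin b} (hp : p ∈ M') :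
    rk M' p ∈ Finset.Icc 1 M'.card := by
  rw [Finset.mem_Icc]
  constructor
  · simp only [rk]
    rw [Nat.one_le_iff_ne_zero, ← Nat.pos_iff_ne_zero, Finset.card_pos]
    exact ⟨p, Finset.mem_filter.mpr ⟨hp, le_refl _⟩⟩
  · exact Finset.card_le_card (Finset.filter_subset _ _)

lemma rk_image {M' : Finset (Fin a × Fin b)} (hnc : NonCrossing M') :
    M'.image (rk M') = Finset.Icc 1 M'.card := by
  apply Finset.eq_of_subset_of_card_le
  · intro k hk
    obtain ⟨p, hp, rfl⟩ := Finset.mem_image.mp hk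
    exact rk_mem_Icc hp
  · rw [Nat.card_Icc, Finset.card_image_of_injOn (rk_injOn hnc)]
    omega


lemma key {M' : Finset (Fin a × Fin b)} (hnc : NonCrossing M') {c w : ℕ}
    (hc : 2 ≤ c) (hw : 1 ≤ w)
    (P : Fin a × Fin b → Prop) [DecidablePred P]
    (hL : (M'.filter P).card ≤ c * w)
    (hconv : ∀ p ∈ M', ∀ q ∈ M', ∀ x ∈ M', P p → P q → p.1 ≤ x.1 → x.1 ≤ q.1 → P x) :
    ((M'.filter fun p => rk M' p % c = 1).filter P).card ≤ w := by
  classical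
  have hcomm : (M'.filter fun p => rk M' p % c = 1).filter P
      = (M'.filter P).filter (fun p => rk M' p % c = 1) := Finset.filter_comm _ _ _
  rw [hcomm]
  set F := M'.filter P with hF
  by_cases hFe : F.Nonempty
  · set L := F.card with hLdef
    have hFsub : F ⊆ M' := Finset.filter_subset _ _
    have hL1 : 1 ≤ L := Finset.card_pos.mpr hFe
    have hinjF : Set.InjOn (rk M') F := (rk_injOn hnc).mono (Finset.coe_subset.mpr hFsub)
    set G := F.image (rk M') with hG
    have hGne : G.Nonempty := hFe.image _
    set m := G.min' hGne with hm
    set Mx := G.max' hGne with hMx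
    obtain ⟨p0, hp0F, hp0⟩ := Finset.mem_image.mp (G.min'_mem hGne)
    obtain ⟨q0, hq0F, hq0⟩ := Finset.mem_image.mp (G.max'_mem hGne)
    have hp0M := hFsub hp0F
    have hq0M := hFsub hq0F
    have hP0 : P p0 := (Finset.mem_filter.mp hp0F).2
    have hQ0 : P q0 := (Finset.mem_filter.mp hq0F).2
    -- convexity of G
    have hIccG : Finset.Icc m Mx ⊆ G := by
      intro k hk
      rw [Finset.mem_Icc] at hk
      have hb1 := Finset.mem_Icc.mp (rk_mem_Icc hp0M)
      have hb2 := Finset.mem_Icc.mp (rk_mem_Icc hq0M)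
      have hm1 : 1 ≤ m := by omega
      have hMxn : Mx ≤ M'.card := by omega
      have hkIcc : k ∈ Finset.Icc 1 M'.card := Finset.mem_Icc.mpr ⟨le_trans hm1 hk.1, le_trans hk.2 hMxn⟩
      rw [← rk_image hnc] at hkIcc
      obtain ⟨x, hxM, hxk⟩ := Finset.mem_image.mp hkIcc
      have h1 : p0.1 ≤ x.1 :=
        fst_le_of_rk_le M' hp0M (by rw [hp0, hxk]; exact hk.1)
      have h2 : x.1 ≤ q0.1 :=
        fst_le_of_rk_le M' hxM (by rw [hq0, hxk]; exact hk.2)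
      have hPx : P x := hconv p0 hp0M q0 hq0M x hxM hP0 hQ0 h1 h2
      exact Finset.mem_image.mpr ⟨x, Finset.mem_filter.mpr ⟨hxM, hPx⟩, hxk⟩
    have hGcard : G.card = L := Finset.card_image_of_injOn hinjF
    have hmMx : m ≤ Mx := Finset.min'_le _ _ (G.max'_mem hGne)
    have hMxlt : Mx < m + L := by
      have h1 : (Finset.Icc m Mx).card ≤ G.card := Finset.card_le_card hIccG
      rw [Nat.card_Icc, hGcard] at h1
      omega
    have hGsub : G ⊆ Finset.Ico m (m + L) := by
      intro k hk
      rw [Finset.mem_Ico]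
      exact ⟨G.min'_le _ hk, lt_of_le_of_lt (G.le_max' _ hk) hMxlt⟩
    -- count
    set F' := F.filter (fun p => rk M' p % c = 1) with hF'
    have hinjF' : Set.InjOn (rk M') F' :=
      hinjF.mono (Finset.coe_subset.mpr (Finset.filter_subset _ _))
    have hcardF' : F'.card = (F'.image (rk M')).card :=
      (Finset.card_image_of_injOn hinjF').symm
    have hsub2 : F'.image (rk M') ⊆ (Finset.Ico m (m+L)).filter fun k => k % c = 1 := by
      intro k hk
      obtain ⟨p, hpF', rfl⟩ := Finset.mem_image.mp hk
      rw [hF', Finset.mem_filter] at hpF'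
      rw [Finset.mem_filter]
      exact ⟨hGsub (Finset.mem_image.mpr ⟨p, hpF'.1, rfl⟩), hpF'.2⟩
    have hfin : F'.card ≤ (L-1)/c + 1 := by
      rw [hcardF']
      exact le_trans (Finset.card_le_card hsub2) (count_upper c m L hc)
    have harith : (L-1)/c + 1 ≤ w := by
      have hcw : c * w = w * c := Nat.mul_comm _ _
      have : (L-1)/c < w := (Nat.div_lt_iff_lt_mul (by omega)).mpr (by omega)
      omega
    exact le_trans hfin harith
  · rw [Finset.not_nonempty_iff_eq_empty] at hFe
    rw [hFe]
    simp only [Finset.filter_empty, Finset.card_empty]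
    omega

end Aux

/-- Let `c > 1` be an integer.  Given a `DPSP` instance `(σ, σ', M, K)`
and a non-crossing subset `M' ⊆ M` that violates every constraint of `K` by a factor of
at most `c`, there is a subset `M'' ⊆ M'` of at least `|M'|/c` demand pairs that satisfies
all constraints of `K` (the polynomial-time computability of `M''` is not formalized). -/
theorem violation_to_satisfaction (a b c : ℕ) (hc : 1 < c)
    (M : Finset (Fin a × Fin b)) (K : Finset (Con a b))
    (hK : ∀ con ∈ K, WellFormed con)
    (M' : Finset (Fin a × Fin b)) (hM'M : M' ⊆ M) (hnc : NonCrossing M')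
    (hviol : ∀ con ∈ K, ViolatesByAtMost M' c con) :
    ∃ M'' ⊆ M', M'.card ≤ c * M''.card ∧ ∀ con ∈ K, Satisfies M'' con := by
  classical
  by_cases hM : M' = ∅
  · refine ⟨∅, Finset.empty_subset _, by simp [hM], fun con hcon => ?_⟩
    cases con <;> simp [Satisfies]
  · have hc2 : 2 ≤ c := hc
    have hn1 : 1 ≤ M'.card := Finset.card_pos.mpr (Finset.nonempty_iff_ne_empty.mpr hM)
    refine ⟨M'.filter fun p => rk M' p % c = 1, Finset.filter_subset _ _, ?_, ?_⟩
    · -- cardinality bound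
      set M'' := M'.filter fun p => rk M' p % c = 1 with hM''
      have himg : M''.image (rk M') = (Finset.Icc 1 M'.card).filter fun k => k % c = 1 := by
        ext k
        simp only [Finset.mem_image, hM'', Finset.mem_filter]
        constructor
        · rintro ⟨p, ⟨hp, hmod⟩, rfl⟩
          exact ⟨rk_mem_Icc hp, hmod⟩
        · rintro ⟨hk, hmod⟩
          rw [← rk_image hnc] at hk
          obtain ⟨p, hp, rfl⟩ := Finset.mem_image.mp hk
          exact ⟨p, ⟨hp, hmod⟩, rfl⟩
      have hinj : Set.InjOn (rk M') M'' :=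
        (rk_injOn hnc).mono (Finset.coe_subset.mpr (Finset.filter_subset _ _))
      have hcard : M''.card = ((Finset.Icc 1 M'.card).filter fun k => k % c = 1).card := by
        rw [← himg, Finset.card_image_of_injOn hinj]
      have hlow : (M'.card-1)/c + 1 ≤ M''.card := by
        rw [hcard]; exact count_lower c M'.card hc2 hn1
      have harith : M'.card ≤ c * ((M'.card-1)/c + 1) := by
        have h1 := Nat.div_add_mod (M'.card-1) c
        have h2 : (M'.card-1) % c < c := Nat.mod_lt _ (by omega)
        have h3 : c * ((M'.card-1)/c + 1) = c * ((M'.card-1)/c) + c := by ring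
        omega
      exact le_trans harith (Nat.mul_le_mul_left c hlow)
    · -- constraints
      intro con hcon
      have hwf := hK con hcon
      have hv := hviol con hcon
      cases con with
      | one x y w =>
        exact key hnc hc2 hwf.2 _ hv fun p hp q hq z hz h1 h2 h5 h6 =>
          ⟨le_trans h1.1 h5, le_trans h6 h2.2⟩
      | two x y w =>
        exact key hnc hc2 hwf.2 _ hv fun p hp q hq z hz h1 h2 h5 h6 =>
          ⟨le_trans h1.1 (snd_le_snd hnc hp hz h5),
           le_trans (snd_le_snd hnc hz hq h6) h2.2⟩
      | three x y w =>
        exact key hnc hc2 hwf _ hv fun p hp q hq z hz h1 h2 h5 h6 =>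
          ⟨le_trans h6 h2.1, le_trans h1.2 (snd_le_snd hnc hp hz h5)⟩
      | four x y w =>
        exact key hnc hc2 hwf _ hv fun p hp q hq z hz h1 h2 h5 h6 =>
          ⟨le_trans h1.1 h5, le_trans (snd_le_snd hnc hz hq h6) h2.2⟩


end DPSP
end
end

section
/- Let G be a graph and T ⊆ V(G) a set of at least 3 terminals such that every terminal has degree 1 in G and no edge of G connects two terminals. Then for every vertex cut (A,C,B) of G with (A ∪ C) ∩ T ≠ ∅ and (B ∪ C) ∩ T ≠ ∅, there exists a vertex cut (A',C',B') of G with C' ∩ T = ∅, (A' ∪ C') ∩ T ≠ ∅ and (B' ∪ C') ∩ T ≠ ∅, whose sparsity with respect to T is at most the sparsity of (A,C,B). Consequently, when G is planar, composing this reduction with an α_AKR-approximation algorithm for the sparsest vertex cut yields an efficient algorithm computing a vertex cut whose sparsity is within factor α_AKR of the minimum and whose separator C contains no terminals. -/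
noncomputable section

namespace NDP

variable {V : Type}

/-- A set `M` of demand pairs can be (fully) routed in `G`: there is a collection of
pairwise node-disjoint paths, containing one path connecting `s` to `t`
for every demand pair `(s, t) ∈ M`. -/
def Routing (G : SimpleGraph V) (M : Finset (V × V)) : Prop :=
  ∃ P : (m : V × V) → m ∈ M → G.Walk m.1 m.2,
    (∀ m (hm : m ∈ M), (P m hm).IsPath) ∧
    (∀ m (hm : m ∈ M) m' (hm' : m' ∈ M), m ≠ m' →
      ∀ v, v ∈ (P m hm).support → v ∉ (P m' hm').support)

/-- `OPT(G, M)`: the maximum number of demand pairs of `M` that can be routed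
simultaneously via node-disjoint paths in `G`. -/
def ndpOpt (G : SimpleGraph V) (M : Finset (V × V)) : ℕ :=
  sSup {n : ℕ | ∃ M' ⊆ M, Routing G M' ∧ M'.card = n}

/-- There are `m` node-disjoint paths in `G`, each connecting a vertex of `A`
to a vertex of `B`. -/
def DisjointPathsBetween (G : SimpleGraph V) (A B : Set V) (m : ℕ) : Prop :=
  ∃ (a b : Fin m → V) (P : (j : Fin m) → G.Walk (a j) (b j)),
    (∀ j, a j ∈ A) ∧ (∀ j, b j ∈ B) ∧ (∀ j, (P j).IsPath) ∧
    (∀ j j', j ≠ j' → ∀ v, v ∈ (P j).support → v ∉ (P j').support)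

/-- A set `T` of vertices is `α`-well-linked in `G`. -/
def WellLinked (G : SimpleGraph V) (T : Finset V) (α : ℝ) : Prop :=
  ∀ T₁ T₂ : Finset V, T₁ ⊆ T → T₂ ⊆ T → Disjoint T₁ T₂ → T₁.card = T₂.card →
    ∃ m : ℕ, α * (T₁.card : ℝ) ≤ (m : ℝ) ∧
      DisjointPathsBetween G (T₁ : Set V) (T₂ : Set V) m

/-- The set of terminals: all vertices participating in the demand pairs of `M`. -/
def terminals [DecidableEq V] (M : Finset (V × V)) : Finset V :=
  M.image Prod.fst ∪ M.image Prod.snd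

/-- `v` has degree exactly `1` in `G`. -/
def DegreeOne (G : SimpleGraph V) (v : V) : Prop := ∃! u, G.Adj v u

/-- Standing assumption on instances: every terminal participates in exactly one
demand pair (so all `2|M|` terminals are distinct), and every terminal has degree `1`. -/
def ProperInstance [DecidableEq V] (G : SimpleGraph V) (M : Finset (V × V)) : Prop :=
  (terminals M).card = 2 * M.card ∧ ∀ v ∈ terminals M, DegreeOne G v

/-- `H` is a minor of `G`. -/
def IsMinorOf {W : Type} (H : SimpleGraph W) (G : SimpleGraph V) : Prop :=
  ∃ f : W → Set V,
    (∀ w, (f w).Nonempty) ∧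
    (∀ w, (G.induce (f w)).Connected) ∧
    (∀ w w', w ≠ w' → Disjoint (f w) (f w')) ∧
    (∀ w w', H.Adj w w' → ∃ a ∈ f w, ∃ b ∈ f w', G.Adj a b)

/-- Planarity, via Wagner's characterization: no `K₅` minor and no `K₃,₃` minor. -/
def IsPlanar (G : SimpleGraph V) : Prop :=
  ¬ IsMinorOf (SimpleGraph.completeGraph (Fin 5)) G ∧
  ¬ IsMinorOf (completeBipartiteGraph (Fin 3) (Fin 3)) G


/-- `(A, C, B)` is a vertex cut of `G`: a tri-partition of `V(G)` such that no edge of `G`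
has one endpoint in `A` and the other in `B`. -/
def IsVertexCut {V : Type} (G : SimpleGraph V) (A C B : Finset V) : Prop :=
  Disjoint A C ∧ Disjoint A B ∧ Disjoint C B ∧
  (∀ v : V, v ∈ A ∨ v ∈ C ∨ v ∈ B) ∧
  (∀ a ∈ A, ∀ b ∈ B, ¬ G.Adj a b)

/-- The sparsity of a vertex cut `(A, C, B)` with respect to the terminal set `T`:
`|C| / (min(|A ∩ T|, |B ∩ T|) + |C ∩ T|)`. -/
def cutSparsity {V : Type} [DecidableEq V] (A C B T : Finset V) : ℝ :=
  (C.card : ℝ) / ((min ((A ∩ T).card) ((B ∩ T).card) + (C ∩ T).card : ℕ) : ℝ)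

/-- Let `G` be a graph and `T` a set of at least `3` terminals, each of
degree `1` in `G`, such that no edge of `G` joins two terminals.  Then for every vertex
cut `(A, C, B)` of `G` with `(A ∪ C) ∩ T ≠ ∅` and `(B ∪ C) ∩ T ≠ ∅`, there is a vertex
cut `(A', C', B')` of `G` with `C' ∩ T = ∅`, `(A' ∪ C') ∩ T ≠ ∅` and
`(B' ∪ C') ∩ T ≠ ∅`, whose sparsity with respect to `T` is at most the sparsity of
`(A, C, B)`.  (Consequently, composing this reduction with an `αAKR`-approximation for
sparsest vertex cut in planar graphs yields an `αAKR`-approximate sparsest cut whose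
separator contains no terminals.) -/
theorem sparsest_cut_terminal_free (V : Type) [Fintype V] [DecidableEq V]
    (G : SimpleGraph V) (T : Finset V)
    (hT3 : 3 ≤ T.card)
    (hdeg : ∀ v ∈ T, DegreeOne G v)
    (hnoedge : ∀ v ∈ T, ∀ v' ∈ T, ¬ G.Adj v v')
    (A C B : Finset V) (hcut : IsVertexCut G A C B)
    (hA : ((A ∪ C) ∩ T).Nonempty) (hB : ((B ∪ C) ∩ T).Nonempty) :
    ∃ A' C' B' : Finset V, IsVertexCut G A' C' B' ∧
      C' ∩ T = ∅ ∧ ((A' ∪ C') ∩ T).Nonempty ∧ ((B' ∪ C') ∩ T).Nonempty ∧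
      cutSparsity A' C' B' T ≤ cutSparsity A C B T := by
  classical
  obtain ⟨hAC, hAB, hCB, hcov, hE⟩ := hcut
  set a := (A ∩ T).card with ha_def
  set b := (B ∩ T).card with hb_def
  set c := (C ∩ T).card with hc_def
  have hcC : c ≤ C.card := Finset.card_le_card (Finset.inter_subset_left)
  -- the old denominator is positive
  have hd1 : 1 ≤ min a b + c := by
    rcases Nat.eq_zero_or_pos c with hc0 | hc
    · have hCT : C ∩ T = ∅ := Finset.card_eq_zero.mp hc0
      obtain ⟨x, hx⟩ := hA
      obtain ⟨y, hy⟩ := hB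
      simp only [Finset.mem_inter, Finset.mem_union] at hx hy
      have hxA : x ∈ A := by
        rcases hx.1 with h | h
        · exact h
        · exact absurd (Finset.mem_inter.mpr ⟨h, hx.2⟩) (by simp [hCT])
      have hyB : y ∈ B := by
        rcases hy.1 with h | h
        · exact h
        · exact absurd (Finset.mem_inter.mpr ⟨h, hy.2⟩) (by simp [hCT])
      have ha1 : 1 ≤ a := Finset.card_pos.mpr ⟨x, Finset.mem_inter.mpr ⟨hxA, hx.2⟩⟩
      have hb1 : 1 ≤ b := Finset.card_pos.mpr ⟨y, Finset.mem_inter.mpr ⟨hyB, hy.2⟩⟩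
      omega
    · omega
  by_cases hbig : min a b + c ≤ C.card
  · -- Case I: old sparsity ≥ 1; use a trivial cut of sparsity 1 around one terminal
    obtain ⟨t, ht⟩ : T.Nonempty := Finset.card_pos.mp (by omega)
    obtain ⟨u, hu, huniq⟩ := hdeg t ht
    have hut : u ∉ T := fun h => hnoedge t ht u h hu
    have htu : t ≠ u := G.ne_of_adj hu
    refine ⟨{t}, {u}, Finset.univ \ {t, u}, ⟨?_, ?_, ?_, ?_, ?_⟩, ?_, ?_, ?_, ?_⟩
    · simp [htu, Ne.symm htu]
    · simp [Finset.disjoint_left]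
    · simp [Finset.disjoint_left]
    · intro v
      by_cases h1 : v = t
      · simp [h1]
      · by_cases h2 : v = u <;> simp [h1, h2]
    · intro x hx y hy hadj
      simp only [Finset.mem_singleton] at hx
      simp only [Finset.mem_sdiff, Finset.mem_univ, Finset.mem_insert,
        Finset.mem_singleton, true_and] at hy
      subst hx
      exact hy (Or.inr (huniq y hadj))
    · exact Finset.singleton_inter_of_notMem hut
    · exact ⟨t, by simp [ht]⟩
    · -- there is another terminal t' ≠ t
      have : (T.erase t).Nonempty := Finset.card_pos.mp (by
        rw [Finset.card_erase_of_mem ht]; omega)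
      obtain ⟨t', ht'⟩ := this
      have ht'T : t' ∈ T := Finset.mem_of_mem_erase ht'
      have ht't : t' ≠ t := Finset.ne_of_mem_erase ht'
      have ht'u : t' ≠ u := fun h => hut (h ▸ ht'T)
      exact ⟨t', by simp [ht'T, ht't, ht'u]⟩
    · -- sparsity of the trivial cut is 1 ≤ old sparsity
      have h1 : ({t} ∩ T) = {t} := Finset.singleton_inter_of_mem ht
      have h2 : ({u} ∩ T) = ∅ := Finset.singleton_inter_of_notMem hut
      have h3 : (Finset.univ \ ({t, u} : Finset V)) ∩ T = T.erase t := by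
        ext x
        simp only [Finset.mem_inter, Finset.mem_sdiff, Finset.mem_univ, Finset.mem_insert,
          Finset.mem_singleton, true_and, Finset.mem_erase]
        constructor
        · rintro ⟨h, hx⟩; exact ⟨fun he => h (Or.inl he), hx⟩
        · rintro ⟨hne, hx⟩
          exact ⟨fun h => by rcases h with h | h; exact hne h; exact hut (h ▸ hx), hx⟩
      have hcard3 : (T.erase t).card = T.card - 1 := Finset.card_erase_of_mem ht
      have hmin : min ({t} : Finset V).card (T.erase t).card = 1 := by
        simp only [Finset.card_singleton, hcard3]
        omega
      unfold cutSparsity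
      rw [h1, h2, h3, hmin]
      simp only [Finset.card_empty, Finset.card_singleton, add_zero, Nat.cast_one]
      rw [div_self (by norm_num)]
      rw [ha_def, hb_def, hc_def] at hbig hd1
      rw [one_le_div (Nat.cast_pos.mpr (by omega))]
      exact_mod_cast hbig
  · -- Case II: old sparsity < 1; move the terminals of C to the side of their neighbor
    push_neg at hbig
    have hab : 1 ≤ min a b := by omega
    obtain ⟨x, hx⟩ : (A ∩ T).Nonempty := Finset.card_pos.mp (by omega)
    obtain ⟨y, hy⟩ : (B ∩ T).Nonempty := Finset.card_pos.mp (by omega)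
    set P : V → Prop := fun t => ∃ u, G.Adj t u ∧ u ∈ B with hP
    set A' := A ∪ (C ∩ T).filter (fun t => ¬ P t) with hA'
    set B' := B ∪ (C ∩ T).filter P with hB'
    set C' := C \ T with hC'
    refine ⟨A', C', B', ⟨?_, ?_, ?_, ?_, ?_⟩, ?_, ?_, ?_, ?_⟩
    · rw [Finset.disjoint_left]
      intro v hv hv'
      rw [hC', Finset.mem_sdiff] at hv'
      rcases Finset.mem_union.mp hv with h | h
      · exact (Finset.disjoint_left.mp hAC) h hv'.1
      · exact hv'.2 (Finset.mem_inter.mp (Finset.mem_of_mem_filter v h)).2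
    · rw [Finset.disjoint_left]
      intro v hv hv'
      rcases Finset.mem_union.mp hv with h | h <;> rcases Finset.mem_union.mp hv' with h' | h'
      · exact (Finset.disjoint_left.mp hAB) h h'
      · exact (Finset.disjoint_left.mp hAC) h (Finset.mem_inter.mp (Finset.mem_of_mem_filter v h')).1
      · exact (Finset.disjoint_left.mp hCB) (Finset.mem_inter.mp (Finset.mem_of_mem_filter v h)).1 h'
      · exact (Finset.mem_filter.mp h).2 (Finset.mem_filter.mp h').2
    · rw [Finset.disjoint_left]
      intro v hv hv'
      rw [hC', Finset.mem_sdiff] at hv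
      rcases Finset.mem_union.mp hv' with h | h
      · exact (Finset.disjoint_left.mp hCB) hv.1 h
      · exact hv.2 (Finset.mem_inter.mp (Finset.mem_of_mem_filter v h)).2
    · intro v
      rcases hcov v with h | h | h
      · exact Or.inl (Finset.mem_union_left _ h)
      · by_cases hvT : v ∈ T
        · by_cases hPv : P v
          · exact Or.inr (Or.inr (Finset.mem_union_right _
              (Finset.mem_filter.mpr ⟨Finset.mem_inter.mpr ⟨h, hvT⟩, hPv⟩)))
          · exact Or.inl (Finset.mem_union_right _
              (Finset.mem_filter.mpr ⟨Finset.mem_inter.mpr ⟨h, hvT⟩, hPv⟩))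
        · exact Or.inr (Or.inl (Finset.mem_sdiff.mpr ⟨h, hvT⟩))
      · exact Or.inr (Or.inr (Finset.mem_union_left _ h))
    · intro p hp q hq hadj
      rcases Finset.mem_union.mp hp with h | h <;> rcases Finset.mem_union.mp hq with h' | h'
      · exact hE p h q h' hadj
      · -- p ∈ A, q is a terminal from C with its neighbor in B
        obtain ⟨w, hw, hwB⟩ := (Finset.mem_filter.mp h').2
        have hqT : q ∈ T := (Finset.mem_inter.mp (Finset.mem_of_mem_filter q h')).2
        obtain ⟨z, _, hzuniq⟩ := hdeg q hqT
        have : p = w := (hzuniq p hadj.symm).trans (hzuniq w hw).symm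
        exact (Finset.disjoint_left.mp hAB) h (this ▸ hwB)
      · -- p is a terminal from C whose neighbors avoid B, q ∈ B
        exact (Finset.mem_filter.mp h).2 ⟨q, hadj, h'⟩
      · -- both are terminals
        exact hnoedge p (Finset.mem_inter.mp (Finset.mem_of_mem_filter p h)).2
          q (Finset.mem_inter.mp (Finset.mem_of_mem_filter q h')).2 hadj
    · exact Finset.sdiff_inter_self T C ▸ rfl
    · exact ⟨x, Finset.mem_inter.mpr ⟨Finset.mem_union_left _
        (Finset.mem_union_left _ (Finset.mem_inter.mp hx).1), (Finset.mem_inter.mp hx).2⟩⟩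
    · exact ⟨y, Finset.mem_inter.mpr ⟨Finset.mem_union_left _
        (Finset.mem_union_left _ (Finset.mem_inter.mp hy).1), (Finset.mem_inter.mp hy).2⟩⟩
    · -- sparsity comparison
      have hC'T : C' ∩ T = ∅ := by rw [hC']; exact Finset.sdiff_inter_self T C
      have ha' : a ≤ (A' ∩ T).card :=
        Finset.card_le_card (Finset.inter_subset_inter (Finset.subset_union_left) le_rfl)
      have hb' : b ≤ (B' ∩ T).card :=
        Finset.card_le_card (Finset.inter_subset_inter (Finset.subset_union_left) le_rfl)
      have hnum : C'.card + c = C.card := by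
        rw [hC', hc_def, add_comm]
        exact Finset.card_inter_add_card_sdiff C T
      unfold cutSparsity
      rw [hC'T]
      set a'' := (A' ∩ T).card
      set b'' := (B' ∩ T).card
      have hmin' : min a b ≤ min a'' b'' := le_min (le_trans (min_le_left _ _) ha')
        (le_trans (min_le_right _ _) hb')
      rw [div_le_div_iff₀ (Nat.cast_pos.mpr (by omega)) (Nat.cast_pos.mpr (by omega))]
      have hn : C'.card ≤ min a b := by omega
      have key : C'.card * (min a b + c) ≤ C.card * (min a'' b'' + 0) := by
        have e1 : C'.card * (min a b + c) = C'.card * min a b + C'.card * c := by ring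
        have e2 : C.card * (min a'' b'' + 0) = C'.card * min a'' b'' + c * min a'' b'' := by
          rw [add_zero, ← hnum]; ring
        rw [e1, e2]
        refine Nat.add_le_add (Nat.mul_le_mul le_rfl hmin') ?_
        calc C'.card * c ≤ min a b * c := Nat.mul_le_mul_right _ hn
          _ ≤ min a'' b'' * c := Nat.mul_le_mul_right _ hmin'
          _ = c * min a'' b'' := Nat.mul_comm _ _
      exact_mod_cast key

end NDP
end
end
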